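/- For all integers n ≥ 4 and 1 ≤ s ≤ n − 2, the number of triangulations T of P_n with D(T) = s equals s · (2n−s−5)! / ( (n−s−2)! · (n−2)! ). -/

import Mathlib

open Finset
open scoped Classical

/-- `IsDiag l r i j` : the pair `{i, j}` (written with `i < j`) is a diagonal of the
convex sub-polygon on vertices `{l, …, r}`. -/
def IsDiag (l r i j : ℕ) : Prop :=
  l ≤ i ∧ i + 2 ≤ j ∧ j ≤ r ∧ ¬(i = l ∧ j = r)

/-- Two diagonals `{a, b}` and `{c, d}` (written with `a < b`, `c < d`) cross. -/
def Crosses (a b c d : ℕ) : Prop :=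
  (a < c ∧ c < b ∧ b < d) ∨ (c < a ∧ a < d ∧ d < b)

/-- All diagonals of the sub-polygon on `{l, …, r}`, as ordered pairs. -/
noncomputable def allDiags (l r : ℕ) : Finset (ℕ × ℕ) :=
  (range (r + 1) ×ˢ range (r + 1)).filter fun p => IsDiag l r p.1 p.2

/-- The triangulations of the sub-polygon on `{l, …, r}` : sets of `r - l - 2`
pairwise noncrossing diagonals. -/
noncomputable def triangulations (l r : ℕ) : Finset (Finset (ℕ × ℕ)) :=
  (allDiags l r).powerset.filter fun T =>
    T.card = r - l - 2 ∧ ∀ d ∈ T, ∀ e ∈ T, ¬ Crosses d.1 d.2 e.1 e.2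

/-- `IsEdge l r i j` : the pair `{i, j}` (with `i < j`) is an edge (boundary side) of the
sub-polygon on `{l, …, r}`. -/
def IsEdge (l r i j : ℕ) : Prop :=
  (l ≤ i ∧ j = i + 1 ∧ j ≤ r) ∨ (i = l ∧ j = r)

/-- `{i, j}` is a side available in the triangulation `T` (an edge of the polygon or a
diagonal of `T`). -/
def IsSide (l r : ℕ) (T : Finset (ℕ × ℕ)) (i j : ℕ) : Prop :=
  IsEdge l r i j ∨ (i, j) ∈ T

/-- The triangles of a triangulation `T` of the sub-polygon on `{l, …, r}`, as ordered
triples `(a, b, c)` with `a < b < c`, each of whose three sides is an edge or a diagonal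
of `T`. -/
noncomputable def triangles (l r : ℕ) (T : Finset (ℕ × ℕ)) : Finset (ℕ × ℕ × ℕ) :=
  (range (r + 1) ×ˢ range (r + 1) ×ˢ range (r + 1)).filter fun t =>
    t.1 < t.2.1 ∧ t.2.1 < t.2.2 ∧
      IsSide l r T t.1 t.2.1 ∧ IsSide l r T t.2.1 t.2.2 ∧ IsSide l r T t.1 t.2.2

/-- The number of sides of the triangle `{a, b, c}` (with `a < b < c`) that are edges of
the sub-polygon on `{l, …, r}`. -/
noncomputable def edgeCount (l r a b c : ℕ) : ℕ :=
  (if IsEdge l r a b then 1 else 0) + (if IsEdge l r b c then 1 else 0) +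
    (if IsEdge l r a c then 1 else 0)

/-- `O(T)` : the number of triangles of `T` with exactly one side an edge of `P_n`. -/
noncomputable def oneSideCount (n : ℕ) (T : Finset (ℕ × ℕ)) : ℕ :=
  ((triangles 1 n T).filter fun t => edgeCount 1 n t.1 t.2.1 t.2.2 = 1).card

/-- `Ear(T)` : the number of triangles of `T` with at least two sides edges of `P_n`. -/
noncomputable def earCount (n : ℕ) (T : Finset (ℕ × ℕ)) : ℕ :=
  ((triangles 1 n T).filter fun t => 2 ≤ edgeCount 1 n t.1 t.2.1 t.2.2).card

/-- `D(T)` : the number of triangles of `T` containing vertex `1`. -/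
noncomputable def degOne (n : ℕ) (T : Finset (ℕ × ℕ)) : ℕ :=
  ((triangles 1 n T).filter fun t => t.1 = 1 ∨ t.2.1 = 1 ∨ t.2.2 = 1).card

/-- `B(T)` : the number of triangles `{l, j, r}` of `T` (with `l < j < r`) such that
`j - l = 1`. -/
noncomputable def blueCount (n : ℕ) (T : Finset (ℕ × ℕ)) : ℕ :=
  ((triangles 1 n T).filter fun t => t.2.1 - t.1 = 1).card

/-- `A_i(T)` : the number of triangles `{1, a, b}` of `T` containing vertex `1`
(written with `1 < a < b`) such that `b - a = i`. -/
noncomputable def angleCount (n : ℕ) (T : Finset (ℕ × ℕ)) (i : ℕ) : ℕ :=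
  ((triangles 1 n T).filter fun t => t.1 = 1 ∧ t.2.2 - t.2.1 = i).card

lemma mem_allDiags {l r : ℕ} {p : ℕ × ℕ} :
    p ∈ allDiags l r ↔ IsDiag l r p.1 p.2 := by
  unfold allDiags
  simp only [Finset.mem_filter, Finset.mem_product, Finset.mem_range]
  constructor
  · rintro ⟨-, h⟩; exact h
  · intro h
    obtain ⟨h1, h2, h3, h4⟩ := h
    exact ⟨⟨by omega, by omega⟩, h1, h2, h3, h4⟩

lemma mem_triangulations {l r : ℕ} {T : Finset (ℕ × ℕ)} :
    T ∈ triangulations l r ↔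
      (∀ p ∈ T, IsDiag l r p.1 p.2) ∧ T.card = r - l - 2 ∧
        (∀ p ∈ T, ∀ q ∈ T, ¬ Crosses p.1 p.2 q.1 q.2) := by
  unfold triangulations
  simp only [Finset.mem_filter, Finset.mem_powerset]
  constructor
  · rintro ⟨hsub, h1, h2⟩
    exact ⟨fun p hp => mem_allDiags.mp (hsub hp), h1, h2⟩
  · rintro ⟨hsub, h1, h2⟩
    exact ⟨fun p hp => mem_allDiags.mpr (hsub p hp), h1, h2⟩

lemma mem_triangles {l r : ℕ} {T : Finset (ℕ × ℕ)} {t : ℕ × ℕ × ℕ} :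
    t ∈ triangles l r T ↔
      t.2.2 ≤ r ∧ t.1 < t.2.1 ∧ t.2.1 < t.2.2 ∧
        IsSide l r T t.1 t.2.1 ∧ IsSide l r T t.2.1 t.2.2 ∧ IsSide l r T t.1 t.2.2 := by
  unfold triangles
  simp only [Finset.mem_filter, Finset.mem_product, Finset.mem_range]
  constructor
  · rintro ⟨⟨-, -, h3⟩, h⟩
    exact ⟨by omega, h⟩
  · rintro ⟨h0, h1, h2, h⟩
    exact ⟨⟨by omega, by omega, by omega⟩, h1, h2, h⟩

lemma isDiag_dest {l r i j : ℕ} (h : IsDiag l r i j) : l ≤ i ∧ i + 2 ≤ j ∧ j ≤ r :=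
  ⟨h.1, h.2.1, h.2.2.1⟩

lemma degOne_eq {n : ℕ} {T : Finset (ℕ × ℕ)} (hT : ∀ p ∈ T, IsDiag 1 n p.1 p.2) :
    degOne n T = ((triangles 1 n T).filter fun t => t.1 = 1).card := by
  unfold degOne
  congr 1
  apply Finset.filter_congr
  intro t ht
  rw [mem_triangles] at ht
  obtain ⟨hr, h1, h2, hs1, hs2, hs3⟩ := ht
  have b1 : 1 ≤ t.1 := by
    rcases hs1 with h | h
    · rcases h with ⟨h1, -, -⟩ | ⟨h1, -⟩ <;> omega
    · have := isDiag_dest (hT _ h); omega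
  have b2 : 1 ≤ t.2.1 := by omega
  constructor
  · rintro (h | h | h)
    · exact h
    · omega
    · omega
  · intro h; exact Or.inl h

noncomputable def conSet (j n : ℕ) : Finset (ℕ × ℕ) :=
  (if 3 ≤ j then {((1:ℕ), j)} else ∅) ∪ (if j + 2 ≤ n then {(j, n)} else ∅)

lemma mem_conSet {j n : ℕ} {p : ℕ × ℕ} :
    p ∈ conSet j n ↔ (3 ≤ j ∧ p = (1, j)) ∨ (j + 2 ≤ n ∧ p = (j, n)) := by
  unfold conSet
  by_cases hc1 : 3 ≤ j <;> by_cases hc2 : j + 2 ≤ n <;>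
    simp [hc1, hc2]

lemma conSet_card {j n : ℕ} (hj : 2 ≤ j) :
    (conSet j n).card = (if 3 ≤ j then 1 else 0) + (if j + 2 ≤ n then 1 else 0) := by
  unfold conSet
  by_cases hc1 : 3 ≤ j <;> by_cases hc2 : j + 2 ≤ n <;> simp [hc1, hc2]
  rw [Finset.card_insert_of_notMem (by simp [Prod.ext_iff]; omega)]
  simp

section Phi

variable {n j : ℕ} {T1 T2 : Finset (ℕ × ℕ)}

lemma key_bounds (hj2 : 2 ≤ j)
    (h1d : ∀ p ∈ T1, IsDiag 1 j p.1 p.2) (h2d : ∀ p ∈ T2, IsDiag j n p.1 p.2) :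
    ∀ p ∈ T1 ∪ T2 ∪ conSet j n,
      (3 ≤ j ∧ p.1 = 1 ∧ p.2 = j) ∨ (j + 2 ≤ n ∧ p.1 = j ∧ p.2 = n) ∨
      (1 ≤ p.1 ∧ p.1 + 2 ≤ p.2 ∧ p.2 ≤ j ∧ p ∈ T1) ∨
      (j ≤ p.1 ∧ p.1 + 2 ≤ p.2 ∧ p.2 ≤ n ∧ p ∈ T2) := by
  intro p hp
  rcases Finset.mem_union.mp hp with hp' | hpc
  · rcases Finset.mem_union.mp hp' with hpa | hpb
    · obtain ⟨a1, a2, a3⟩ := isDiag_dest (h1d p hpa)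
      exact Or.inr (Or.inr (Or.inl ⟨a1, a2, a3, hpa⟩))
    · obtain ⟨a1, a2, a3⟩ := isDiag_dest (h2d p hpb)
      exact Or.inr (Or.inr (Or.inr ⟨a1, a2, a3, hpb⟩))
  · rcases mem_conSet.mp hpc with ⟨hc, he⟩ | ⟨hc, he⟩
    · exact Or.inl ⟨hc, by rw [he], by rw [he]⟩
    · exact Or.inr (Or.inl ⟨hc, by rw [he], by rw [he]⟩)

lemma phi_noncross (hj2 : 2 ≤ j)
    (h1d : ∀ p ∈ T1, IsDiag 1 j p.1 p.2) (h2d : ∀ p ∈ T2, IsDiag j n p.1 p.2)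
    (h1nc : ∀ p ∈ T1, ∀ q ∈ T1, ¬ Crosses p.1 p.2 q.1 q.2)
    (h2nc : ∀ p ∈ T2, ∀ q ∈ T2, ¬ Crosses p.1 p.2 q.1 q.2) :
    ∀ p ∈ T1 ∪ T2 ∪ conSet j n, ∀ q ∈ T1 ∪ T2 ∪ conSet j n,
      ¬ Crosses p.1 p.2 q.1 q.2 := by
  intro p hp q hq
  rcases key_bounds hj2 h1d h2d p hp with hP | hP | hP | hP <;>
    rcases key_bounds hj2 h1d h2d q hq with hQ | hQ | hQ | hQ <;>
      first
        | exact h1nc p hP.2.2.2 q hQ.2.2.2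
        | exact h2nc p hP.2.2.2 q hQ.2.2.2
        | (intro hcr; unfold Crosses at hcr; omega)

lemma phi_disjoint (hj2 : 2 ≤ j) (hjn : j + 1 ≤ n)
    (h1d : ∀ p ∈ T1, IsDiag 1 j p.1 p.2) (h2d : ∀ p ∈ T2, IsDiag j n p.1 p.2) :
    Disjoint T1 T2 ∧ Disjoint (T1 ∪ T2) (conSet j n) := by
  constructor
  · rw [Finset.disjoint_left]
    intro p hp1 hp2
    obtain ⟨a1, a2, a3⟩ := isDiag_dest (h1d p hp1)
    obtain ⟨b1, b2, b3⟩ := isDiag_dest (h2d p hp2)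
    omega
  · rw [Finset.disjoint_left]
    intro p hp hpc
    rcases mem_conSet.mp hpc with ⟨hc, he⟩ | ⟨hc, he⟩ <;>
      rcases Finset.mem_union.mp hp with hp' | hp'
    · exact (h1d p hp').2.2.2 ⟨by rw [he], by rw [he]⟩
    · obtain ⟨b1, b2, b3⟩ := isDiag_dest (h2d p hp')
      have e1 : p.1 = 1 := by rw [he]
      omega
    · obtain ⟨b1, b2, b3⟩ := isDiag_dest (h1d p hp')
      have e2 : p.2 = n := by rw [he]
      have e1 : p.1 = j := by rw [he]
      omega
    · exact (h2d p hp').2.2.2 ⟨by rw [he], by rw [he]⟩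

lemma phi_triang (hn : 4 ≤ n) (hj2 : 2 ≤ j) (hjn : j + 1 ≤ n)
    (h1 : T1 ∈ triangulations 1 j) (h2 : T2 ∈ triangulations j n) :
    T1 ∪ T2 ∪ conSet j n ∈ triangulations 1 n := by
  obtain ⟨h1d, h1c, h1nc⟩ := mem_triangulations.mp h1
  obtain ⟨h2d, h2c, h2nc⟩ := mem_triangulations.mp h2
  obtain ⟨dis1, dis2⟩ := phi_disjoint hj2 hjn h1d h2d
  refine mem_triangulations.mpr ⟨?_, ?_, phi_noncross hj2 h1d h2d h1nc h2nc⟩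
  · intro p hp
    rcases key_bounds hj2 h1d h2d p hp with ⟨c, e1, e2⟩ | ⟨c, e1, e2⟩ |
      ⟨b1, b2, b3, -⟩ | ⟨b1, b2, b3, -⟩ <;>
      exact ⟨by omega, by omega, by omega, by omega⟩
  · rw [Finset.card_union_of_disjoint dis2, Finset.card_union_of_disjoint dis1,
      h1c, h2c, conSet_card hj2]
    split_ifs <;> omega

lemma side_lift (hj2 : 2 ≤ j) (hjn : j + 1 ≤ n) {x y : ℕ}
    (h : IsSide 1 j T1 x y) : IsSide 1 n (T1 ∪ T2 ∪ conSet j n) x y := by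
  rcases h with (⟨a1, a2, a3⟩ | ⟨a1, a2⟩) | h
  · exact Or.inl (Or.inl ⟨a1, a2, by omega⟩)
  · by_cases hj3 : 3 ≤ j
    · exact Or.inr (Finset.mem_union.mpr (Or.inr (mem_conSet.mpr
        (Or.inl ⟨hj3, by rw [Prod.ext_iff]; exact ⟨a1, a2⟩⟩))))
    · exact Or.inl (Or.inl ⟨by omega, by omega, by omega⟩)
  · exact Or.inr (Finset.mem_union.mpr (Or.inl (Finset.mem_union.mpr (Or.inl h))))

lemma side_jn (hj2 : 2 ≤ j) (hjn : j + 1 ≤ n) :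
    IsSide 1 n (T1 ∪ T2 ∪ conSet j n) j n := by
  by_cases hc : j + 2 ≤ n
  · exact Or.inr (Finset.mem_union.mpr (Or.inr (mem_conSet.mpr (Or.inr ⟨hc, rfl⟩))))
  · exact Or.inl (Or.inl ⟨by omega, by omega, le_rfl⟩)

lemma tri_1jn_mem (hn : 4 ≤ n) (hj2 : 2 ≤ j) (hjn : j + 1 ≤ n) :
    ((1 : ℕ), j, n) ∈ triangles 1 n (T1 ∪ T2 ∪ conSet j n) := by
  rw [mem_triangles]
  have g1 : (1:ℕ) < j := by omega
  have g2 : j < n := by omega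
  refine ⟨le_rfl, g1, g2, ?_, side_jn hj2 hjn, Or.inl (Or.inr ⟨rfl, rfl⟩)⟩
  · -- side (1, j)
    by_cases hj3 : 3 ≤ j
    · exact Or.inr (Finset.mem_union.mpr (Or.inr (mem_conSet.mpr (Or.inl ⟨hj3, rfl⟩))))
    · exact Or.inl (Or.inl ⟨le_rfl, show j = 1 + 1 by omega, show j ≤ n by omega⟩)

lemma side_from_one (hj2 : 2 ≤ j) (hjn : j + 1 ≤ n)
    (h1d : ∀ p ∈ T1, IsDiag 1 j p.1 p.2) (h2d : ∀ p ∈ T2, IsDiag j n p.1 p.2)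
    {x : ℕ} (hx : IsSide 1 n (T1 ∪ T2 ∪ conSet j n) 1 x) (hxn : x ≠ n) :
    x ≤ j ∧ (x = 2 ∨ (1, x) ∈ T1 ∨ x = j) := by
  rcases hx with (⟨a1, a2, a3⟩ | ⟨a1, a2⟩) | h
  · exact ⟨by omega, Or.inl (by omega)⟩
  · omega
  · rcases Finset.mem_union.mp h with h' | hc
    · rcases Finset.mem_union.mp h' with ha | hb
      · obtain ⟨b1, b2, b3⟩ := isDiag_dest (h1d _ ha)
        exact ⟨by omega, Or.inr (Or.inl ha)⟩
      · obtain ⟨b1, b2, b3⟩ := isDiag_dest (h2d _ hb)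
        omega
    · rcases mem_conSet.mp hc with ⟨c, he⟩ | ⟨c, he⟩
      · rw [Prod.ext_iff] at he
        exact ⟨by omega, Or.inr (Or.inr he.2)⟩
      · rw [Prod.ext_iff] at he
        simp at he
        omega

lemma side_to_n (hj2 : 2 ≤ j) (hjn : j + 1 ≤ n)
    (h1d : ∀ p ∈ T1, IsDiag 1 j p.1 p.2) (h2d : ∀ p ∈ T2, IsDiag j n p.1 p.2)
    {b : ℕ} (hb : IsSide 1 n (T1 ∪ T2 ∪ conSet j n) b n) (h1b : 1 < b) (hbn : b < n) :
    b = n - 1 ∨ j ≤ b := by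
  rcases hb with (⟨a1, a2, a3⟩ | ⟨a1, a2⟩) | h
  · omega
  · omega
  · rcases Finset.mem_union.mp h with h' | hc
    · rcases Finset.mem_union.mp h' with ha | hbm
      · obtain ⟨b1, b2, b3⟩ := isDiag_dest (h1d _ ha)
        omega
      · obtain ⟨b1, b2, b3⟩ := isDiag_dest (h2d _ hbm)
        omega
    · rcases mem_conSet.mp hc with ⟨c, he⟩ | ⟨c, he⟩ <;> rw [Prod.ext_iff] at he <;>
        simp at he <;> omega

lemma side_down (hj2 : 2 ≤ j) (hjn : j + 1 ≤ n)
    (h1d : ∀ p ∈ T1, IsDiag 1 j p.1 p.2) (h2d : ∀ p ∈ T2, IsDiag j n p.1 p.2)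
    {b c : ℕ} (h : IsSide 1 n (T1 ∪ T2 ∪ conSet j n) b c) (h1b : 1 ≤ b) (hcj : c ≤ j) :
    IsSide 1 j T1 b c := by
  rcases h with (⟨a1, a2, a3⟩ | ⟨a1, a2⟩) | h
  · exact Or.inl (Or.inl ⟨a1, a2, hcj⟩)
  · omega
  · rcases Finset.mem_union.mp h with h' | hc
    · rcases Finset.mem_union.mp h' with ha | hbm
      · exact Or.inr ha
      · obtain ⟨b1, b2, b3⟩ := isDiag_dest (h2d _ hbm)
        omega
    · rcases mem_conSet.mp hc with ⟨cc, he⟩ | ⟨cc, he⟩ <;> rw [Prod.ext_iff] at he <;>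
        simp at he
      · exact Or.inl (Or.inr ⟨he.1, he.2⟩)
      · exfalso; omega

end Phi

section Phi2

variable {n j : ℕ} {T1 T2 : Finset (ℕ × ℕ)}

lemma phi_tri_filter (hn : 4 ≤ n) (hj2 : 2 ≤ j) (hjn : j + 1 ≤ n)
    (h1d : ∀ p ∈ T1, IsDiag 1 j p.1 p.2) (h2d : ∀ p ∈ T2, IsDiag j n p.1 p.2) :
    (triangles 1 n (T1 ∪ T2 ∪ conSet j n)).filter (fun t => t.1 = 1) =
      insert ((1:ℕ), j, n) ((triangles 1 j T1).filter (fun t => t.1 = 1)) := by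
  ext t
  simp only [Finset.mem_filter, Finset.mem_insert]
  constructor
  · rintro ⟨ht, ht1⟩
    rw [mem_triangles] at ht
    obtain ⟨hr, o1, o2, s1, s2, s3⟩ := ht
    rw [ht1] at s1 s3
    by_cases hc : t.2.2 = n
    · -- the triangle (1, j, n)
      rw [hc] at s2
      obtain ⟨hbj, -⟩ := side_from_one hj2 hjn h1d h2d s1 (by omega)
      have hbig := side_to_n hj2 hjn h1d h2d s2 (by omega) (by omega)
      have hbeq : t.2.1 = j := by omega
      exact Or.inl (Prod.ext ht1 (Prod.ext hbeq hc))
    · right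
      obtain ⟨hcj, hcs⟩ := side_from_one hj2 hjn h1d h2d s3 hc
      obtain ⟨hbj, hbs⟩ := side_from_one hj2 hjn h1d h2d s1 (by omega)
      refine ⟨mem_triangles.mpr ⟨hcj, o1, o2, ?_, ?_, ?_⟩, ht1⟩
      · -- side (1, t.2.1) in subpolygon
        rw [ht1]
        rcases hbs with h | h | h
        · exact Or.inl (Or.inl ⟨le_rfl, by omega, by omega⟩)
        · exact Or.inr h
        · omega
      · exact side_down hj2 hjn h1d h2d s2 (by omega) hcj
      · rw [ht1]
        rcases hcs with h | h | h
        · omega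
        · exact Or.inr h
        · exact Or.inl (Or.inr ⟨rfl, h⟩)
  · rintro (rfl | ⟨ht, ht1⟩)
    · exact ⟨tri_1jn_mem hn hj2 hjn, rfl⟩
    · rw [mem_triangles] at ht
      obtain ⟨hr, o1, o2, s1, s2, s3⟩ := ht
      exact ⟨mem_triangles.mpr ⟨by omega, o1, o2, side_lift hj2 hjn s1,
        side_lift hj2 hjn s2, side_lift hj2 hjn s3⟩, ht1⟩

lemma phi_degOne (hn : 4 ≤ n) (hj2 : 2 ≤ j) (hjn : j + 1 ≤ n)
    (h1d : ∀ p ∈ T1, IsDiag 1 j p.1 p.2) (h2d : ∀ p ∈ T2, IsDiag j n p.1 p.2) :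
    degOne n (T1 ∪ T2 ∪ conSet j n) = degOne j T1 + 1 := by
  have hUd : ∀ p ∈ T1 ∪ T2 ∪ conSet j n, IsDiag 1 n p.1 p.2 := by
    intro p hp
    rcases key_bounds hj2 h1d h2d p hp with ⟨c, e1, e2⟩ | ⟨c, e1, e2⟩ |
      ⟨b1, b2, b3, -⟩ | ⟨b1, b2, b3, -⟩ <;>
      exact ⟨by omega, by omega, by omega, by omega⟩
  rw [degOne_eq hUd, degOne_eq h1d, phi_tri_filter hn hj2 hjn h1d h2d,
    Finset.card_insert_of_notMem]
  intro hmem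
  rw [Finset.mem_filter, mem_triangles] at hmem
  obtain ⟨⟨hle, -⟩, -⟩ := hmem
  simp only at hle
  omega

/-- `j` is characterized as the largest `k < n` with `(1,k)` a side. -/
lemma phi_side_max (hj2 : 2 ≤ j) (hjn : j + 1 ≤ n)
    (h1d : ∀ p ∈ T1, IsDiag 1 j p.1 p.2) (h2d : ∀ p ∈ T2, IsDiag j n p.1 p.2) :
    IsSide 1 n (T1 ∪ T2 ∪ conSet j n) 1 j ∧
      ∀ k, j < k → k < n → ¬ IsSide 1 n (T1 ∪ T2 ∪ conSet j n) 1 k := by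
  constructor
  · by_cases hj3 : 3 ≤ j
    · exact Or.inr (Finset.mem_union.mpr (Or.inr (mem_conSet.mpr (Or.inl ⟨hj3, rfl⟩))))
    · exact Or.inl (Or.inl ⟨le_rfl, by omega, by omega⟩)
  · intro k hk1 hk2 hside
    obtain ⟨hkj, -⟩ := side_from_one hj2 hjn h1d h2d hside (by omega)
    omega

lemma phi_recover_T1 (hj2 : 2 ≤ j) (hjn : j + 1 ≤ n)
    (h1d : ∀ p ∈ T1, IsDiag 1 j p.1 p.2) (h2d : ∀ p ∈ T2, IsDiag j n p.1 p.2) :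
    (T1 ∪ T2 ∪ conSet j n).filter (fun p => IsDiag 1 j p.1 p.2) = T1 := by
  ext p
  rw [Finset.mem_filter]
  constructor
  · rintro ⟨hp, hd⟩
    obtain ⟨d1, d2, d3, d4⟩ := hd
    rcases key_bounds hj2 h1d h2d p hp with ⟨c, e1, e2⟩ | ⟨c, e1, e2⟩ |
      ⟨b1, b2, b3, hm⟩ | ⟨b1, b2, b3, hm⟩
    · exact absurd ⟨e1, e2⟩ d4
    · omega
    · exact hm
    · omega
  · intro hp
    exact ⟨Finset.mem_union.mpr (Or.inl (Finset.mem_union.mpr (Or.inl hp))), h1d p hp⟩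

lemma phi_recover_T2 (hj2 : 2 ≤ j) (hjn : j + 1 ≤ n)
    (h1d : ∀ p ∈ T1, IsDiag 1 j p.1 p.2) (h2d : ∀ p ∈ T2, IsDiag j n p.1 p.2) :
    (T1 ∪ T2 ∪ conSet j n).filter (fun p => IsDiag j n p.1 p.2) = T2 := by
  ext p
  rw [Finset.mem_filter]
  constructor
  · rintro ⟨hp, hd⟩
    obtain ⟨d1, d2, d3, d4⟩ := hd
    rcases key_bounds hj2 h1d h2d p hp with ⟨c, e1, e2⟩ | ⟨c, e1, e2⟩ |
      ⟨b1, b2, b3, hm⟩ | ⟨b1, b2, b3, hm⟩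
    · omega
    · exact absurd ⟨e1, e2⟩ d4
    · omega
    · exact hm
  · intro hp
    exact ⟨Finset.mem_union.mpr (Or.inl (Finset.mem_union.mpr (Or.inr hp))), h2d p hp⟩

end Phi2

/-- abstract diagonal of the "polygon" on vertex set `V` -/
def VDiag (V : Finset ℕ) (p : ℕ × ℕ) : Prop :=
  p.1 ∈ V ∧ p.2 ∈ V ∧ p.1 < p.2 ∧ (∃ v ∈ V, p.1 < v ∧ v < p.2) ∧
    (∃ w ∈ V, w < p.1 ∨ p.2 < w)

lemma four_le_card {V : Finset ℕ} {x1 x2 x3 x4 : ℕ} (h1 : x1 ∈ V) (h2 : x2 ∈ V)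
    (h3 : x3 ∈ V) (h4 : x4 ∈ V) (o1 : x1 < x2) (o2 : x2 < x3) (o3 : x3 < x4) :
    4 ≤ V.card := by
  have hsub : ({x1, x2, x3, x4} : Finset ℕ) ⊆ V := by
    intro y hy
    simp only [Finset.mem_insert, Finset.mem_singleton] at hy
    rcases hy with rfl | rfl | rfl | rfl <;> assumption
  have hcard : ({x1, x2, x3, x4} : Finset ℕ).card = 4 := by
    rw [Finset.card_insert_of_notMem (by simp; omega),
      Finset.card_insert_of_notMem (by simp; omega),
      Finset.card_insert_of_notMem (by simp; omega), Finset.card_singleton]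
  calc 4 = ({x1, x2, x3, x4} : Finset ℕ).card := hcard.symm
    _ ≤ V.card := Finset.card_le_card hsub

lemma noncross_card_bound : ∀ (N : ℕ) (S : Finset (ℕ × ℕ)) (V : Finset ℕ),
    S.card ≤ N →
    (∀ p ∈ S, VDiag V p) →
    (∀ p ∈ S, ∀ q ∈ S, ¬ Crosses p.1 p.2 q.1 q.2) →
    S = ∅ ∨ S.card + 3 ≤ V.card := by
  intro N
  induction N with
  | zero =>
    intro S V hc _ _
    left
    exact Finset.card_eq_zero.mp (by omega)
  | succ N ih =>
    intro S V hc hdiag hnc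
    rcases Finset.eq_empty_or_nonempty S with rfl | hne
    · left; rfl
    right
    obtain ⟨p, hp, hmin⟩ := S.exists_min_image (fun q => q.2 - q.1) hne
    obtain ⟨haV, hbV, hab, ⟨v0, hv0V, hv0a, hv0b⟩, ⟨w0, hw0V, hw0⟩⟩ := hdiag p hp
    set a := p.1 with ha
    set b := p.2 with hb
    -- endpoints of other diagonals avoid the open interval (a, b)
    have claim1 : ∀ q ∈ S, q ≠ p →
        (q.1 ≤ a ∨ b ≤ q.1) ∧ (q.2 ≤ a ∨ b ≤ q.2) := by
      intro q hq hqp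
      have h1 := hnc p hp q hq
      have h2 := hnc q hq p hp
      have h3 := hmin q hq
      obtain ⟨-, -, hcd, -, -⟩ := hdiag q hq
      have hne' : ¬(q.1 = a ∧ q.2 = b) := by
        intro ⟨e1, e2⟩
        exact hqp (Prod.ext e1 e2)
      unfold Crosses at h1 h2
      omega
    set V' := V.filter (fun v => ¬ (a < v ∧ v < b)) with hV'
    have haV' : a ∈ V' := by simp [hV', haV]
    have hbV' : b ∈ V' := by simp [hV', hbV]
    set S' := S.erase p with hS'
    have hdiag' : ∀ q ∈ S', VDiag V' q := by
      intro q hq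
      have hqS := Finset.mem_of_mem_erase hq
      have hqp := Finset.ne_of_mem_erase hq
      obtain ⟨hc1, hc2⟩ := claim1 q hqS hqp
      obtain ⟨h1V, h2V, hlt, ⟨v, hvV, hv1, hv2⟩, ⟨w, hwV, hw⟩⟩ := hdiag q hqS
      refine ⟨?_, ?_, hlt, ?_, ?_⟩
      · simp only [hV', Finset.mem_filter]; exact ⟨h1V, by omega⟩
      · simp only [hV', Finset.mem_filter]; exact ⟨h2V, by omega⟩
      · -- interior vertex
        by_cases hvin : a < v ∧ v < b
        · -- replace by a or b
          have hc1' : q.1 ≤ a := by omega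
          have hc2' : b ≤ q.2 := by omega
          rcases Nat.lt_or_ge b q.2 with hbd | hbd
          · exact ⟨b, hbV', by omega⟩
          · -- q.2 = b, so q.1 < a
            have : q.1 ≠ a ∨ q.2 ≠ b := by
              by_contra hcon
              push_neg at hcon
              exact hqp (Prod.ext hcon.1 hcon.2)
            exact ⟨a, haV', by omega⟩
        · exact ⟨v, by simp only [hV', Finset.mem_filter]; exact ⟨hvV, hvin⟩, by omega⟩
      · -- exterior vertex
        by_cases hwin : a < w ∧ w < b
        · rcases hw with hw | hw
          · exact ⟨a, haV', by omega⟩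
          · exact ⟨b, hbV', by omega⟩
        · exact ⟨w, by simp only [hV', Finset.mem_filter]; exact ⟨hwV, hwin⟩, hw⟩
    have hnc' : ∀ q ∈ S', ∀ q' ∈ S', ¬ Crosses q.1 q.2 q'.1 q'.2 := by
      intro q hq q' hq'
      exact hnc q (Finset.mem_of_mem_erase hq) q' (Finset.mem_of_mem_erase hq')
    have hcard' : S'.card = S.card - 1 := Finset.card_erase_of_mem hp
    have hVlt : V'.card < V.card := by
      apply Finset.card_lt_card
      constructor
      · exact Finset.filter_subset _ _
      · intro hsub
        have := hsub hv0V
        simp [hV'] at this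
        omega
    rcases ih S' V' (by omega) hdiag' hnc' with hS'e | hbound
    · -- S = {p} : need 4 ≤ V.card
      have hS1 : S.card = 1 := by
        have := Finset.card_erase_of_mem hp
        rw [hS'e] at hS'
        have : S.card - 1 = 0 := by rw [← hcard', hS'e]; simp
        have hpos : 0 < S.card := Finset.card_pos.mpr hne
        omega
      rw [hS1]
      rcases hw0 with hw0 | hw0
      · exact four_le_card hw0V haV hv0V hbV hw0 hv0a hv0b
      · exact four_le_card haV hv0V hbV hw0V hv0a hv0b hw0
    · have hpos : 0 < S.card := Finset.card_pos.mpr hne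
      omega

lemma diag_card_bound {l r : ℕ} {S : Finset (ℕ × ℕ)}
    (hS : ∀ p ∈ S, p ∈ allDiags l r)
    (hnc : ∀ p ∈ S, ∀ q ∈ S, ¬ Crosses p.1 p.2 q.1 q.2) :
    S.card ≤ r - l - 2 := by
  have hd : ∀ p ∈ S, VDiag (Finset.Icc l r) p := by
    intro p hp
    obtain ⟨h1, h2, h3, h4⟩ := mem_allDiags.mp (hS p hp)
    refine ⟨by simp; omega, by simp; omega, by omega, ⟨p.1 + 1, by simp; omega, by omega⟩, ?_⟩
    rcases Nat.lt_or_ge l p.1 with h | h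
    · exact ⟨l, by simp; omega, by omega⟩
    · exact ⟨r, by simp; omega, by omega⟩
  rcases noncross_card_bound S.card S (Finset.Icc l r) le_rfl hd hnc with he | hb
  · subst he; simp
  · rw [Nat.card_Icc] at hb
    omega

/-- ballot numbers as rationals -/
noncomputable def bQ (k s : ℕ) : ℚ :=
  if 1 ≤ s ∧ s ≤ k then
    (s : ℚ) * ((2 * k - s - 1).factorial : ℚ) / (((k - s).factorial : ℚ) * (k.factorial : ℚ))
  else if k = 0 ∧ s = 0 then 1 else 0

lemma bQ_zero_of_gt {k s : ℕ} (h : k < s) : bQ k s = 0 := by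
  unfold bQ
  rw [if_neg (by omega), if_neg (by omega)]

lemma bQ_zero_zero : bQ 0 0 = 1 := by simp [bQ]

lemma bQ_zero_of_pos {s : ℕ} (h : 1 ≤ s) : bQ 0 s = 0 := bQ_zero_of_gt h

lemma bQ_pos_zero {k : ℕ} (h : 1 ≤ k) : bQ k 0 = 0 := by
  unfold bQ
  rw [if_neg (by omega), if_neg (by omega)]

lemma bQ_formula {k s : ℕ} (h : s ≤ k) (hk : 1 ≤ k) :
    bQ k s = (s : ℚ) * ((2 * k - s - 1).factorial : ℚ) /
      (((k - s).factorial : ℚ) * (k.factorial : ℚ)) := by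
  rcases Nat.eq_zero_or_pos s with hs | hs
  · subst hs
    unfold bQ
    rw [if_neg (by omega), if_neg (by omega)]
    simp
  · unfold bQ; rw [if_pos ⟨hs, h⟩]

lemma factorial_cast_pos (m : ℕ) : (0:ℚ) < (m.factorial : ℚ) := by
  exact_mod_cast m.factorial_pos

lemma bQ_pascal (k s : ℕ) : bQ (k+1) (s+1) = bQ (k+1) (s+2) + bQ k s := by
  rcases lt_trichotomy s k with h | h | h
  · -- s < k
    obtain ⟨m, rfl⟩ : ∃ m, k = s + m + 1 := ⟨k - s - 1, by omega⟩
    rw [bQ_formula (by omega) (by omega), bQ_formula (by omega) (by omega),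
      bQ_formula (by omega) (by omega)]
    have e1 : 2 * (s + m + 1 + 1) - (s+1) - 1 = (s + 2*m + 2) := by omega
    have e2 : (s + m + 1 + 1) - (s + 1) = m + 1 := by omega
    have e3 : 2 * (s + m + 1 + 1) - (s + 2) - 1 = s + 2*m + 1 := by omega
    have e4 : (s + m + 1 + 1) - (s + 2) = m := by omega
    have e5 : 2 * (s + m + 1) - s - 1 = s + 2*m + 1 := by omega
    have e6 : (s + m + 1) - s = m + 1 := by omega
    rw [e1, e2, e3, e4, e5, e6]
    have f1 : ((s + 2*m + 2).factorial : ℚ) = (s + 2*m + 2) * ((s + 2*m + 1).factorial) := by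
      rw [show s + 2*m + 2 = (s + 2*m + 1) + 1 by ring, Nat.factorial_succ]; push_cast; ring
    have f2 : ((m+1).factorial : ℚ) = (m+1) * (m.factorial) := by
      rw [Nat.factorial_succ]; push_cast; ring
    have f3 : ((s + m + 1 + 1).factorial : ℚ) = (s + m + 2) * ((s + m + 1).factorial) := by
      rw [show s + m + 1 + 1 = (s + m + 1) + 1 by ring, Nat.factorial_succ]; push_cast; ring
    rw [f1, f2, f3]
    have h1 := factorial_cast_pos m
    have h2 := factorial_cast_pos (s + m + 1)
    have h3 := factorial_cast_pos (s + 2*m + 1)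
    field_simp
    push_cast
    ring
  · -- s = k
    subst h
    have l : bQ (s+1) (s+1) = 1 := by
      rw [bQ_formula le_rfl (by omega)]
      have e1 : 2 * (s+1) - (s+1) - 1 = s := by omega
      have e2 : (s+1) - (s+1) = 0 := by omega
      rw [e1, e2, Nat.factorial_zero]
      rw [show (s+1).factorial = (s+1) * s.factorial from Nat.factorial_succ s]
      have := factorial_cast_pos s
      push_cast
      field_simp
    have r : bQ s s = 1 := by
      rcases Nat.eq_zero_or_pos s with hs | hs
      · subst hs; exact bQ_zero_zero
      · rw [bQ_formula le_rfl hs]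
        have e1 : 2 * s - s - 1 = s - 1 := by omega
        have e2 : s - s = 0 := by omega
        rw [e1, e2, Nat.factorial_zero]
        obtain ⟨t, rfl⟩ : ∃ t, s = t + 1 := ⟨s - 1, by omega⟩
        rw [show (t+1) - 1 = t by omega,
          show (t+1).factorial = (t+1) * t.factorial from Nat.factorial_succ t]
        have := factorial_cast_pos t
        push_cast
        field_simp
    rw [l, r, bQ_zero_of_gt (by omega)]
    ring
  · -- k < s
    rw [bQ_zero_of_gt (by omega), bQ_zero_of_gt (by omega), bQ_zero_of_gt (by omega)]
    ring

noncomputable def CQ (i : ℕ) : ℚ := (catalan i : ℚ)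

lemma CQ_closed (k : ℕ) : CQ k = ((2*k).factorial : ℚ) / (k.factorial * (k+1).factorial) := by
  unfold CQ
  rw [catalan_eq_centralBinom_div, Nat.cast_div (Nat.succ_dvd_centralBinom k) (by exact_mod_cast (Nat.succ_ne_zero k))]
  unfold Nat.centralBinom
  rw [Nat.cast_choose ℚ (by omega : k ≤ 2*k)]
  have e : 2*k - k = k := by omega
  rw [e, show (k+1).factorial = (k+1) * k.factorial from Nat.factorial_succ k]
  have h1 := factorial_cast_pos k
  push_cast
  field_simp

lemma bQ_one (k : ℕ) : bQ (k+1) 1 = CQ k := by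
  rw [bQ_formula (by omega) (by omega), CQ_closed]
  have e1 : 2 * (k+1) - 1 - 1 = 2*k := by omega
  have e2 : (k+1) - 1 = k := by omega
  rw [e1, e2]
  ring

lemma bQ_conv : ∀ k s : ℕ, ∑ i ∈ range k, bQ i s * CQ (k - 1 - i) = bQ k (s+1) := by
  intro k
  induction k with
  | zero => intro s; simp [bQ_zero_of_pos]
  | succ k ih =>
    -- downward induction on s
    have main : ∀ d s : ℕ, k + 1 ≤ s + d →
        ∑ i ∈ range (k+1), bQ i s * CQ (k + 1 - 1 - i) = bQ (k+1) (s+1) := by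
      intro d
      induction d with
      | zero =>
        intro s hs
        rw [bQ_zero_of_gt (by omega)]
        apply Finset.sum_eq_zero
        intro i hi
        rw [Finset.mem_range] at hi
        rw [bQ_zero_of_gt (by omega)]
        ring
      | succ d ihd =>
        intro s hs
        rcases Nat.lt_or_ge s (k+1) with hlt | hge
        · rcases Nat.eq_zero_or_pos s with rfl | hspos
          · -- s = 0 : only i = 0 contributes
            rw [Finset.sum_eq_single 0]
            · simp only [bQ_zero_zero, Nat.sub_zero, one_mul]
              rw [bQ_one]
              norm_num
            · intro i hi hne
              rw [bQ_pos_zero (by omega)]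
              ring
            · intro h; exact absurd (Finset.mem_range.mpr (by omega)) h
          · obtain ⟨t, rfl⟩ : ∃ t, s = t + 1 := ⟨s - 1, by omega⟩
            rw [Finset.sum_range_succ']
            have step : ∀ i ∈ range k, bQ (i+1) (t+1) * CQ (k + 1 - 1 - (i+1))
                = bQ (i+1) (t+2) * CQ (k + 1 - 1 - (i+1)) + bQ i t * CQ (k - 1 - i) := by
              intro i hi
              rw [bQ_pascal i t]
              rw [show k + 1 - 1 - (i+1) = k - 1 - i by omega]
              ring
            rw [Finset.sum_congr rfl step, Finset.sum_add_distrib, ih t]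
            have first : ∑ i ∈ range k, bQ (i+1) (t+2) * CQ (k + 1 - 1 - (i+1))
                = ∑ i ∈ range (k+1), bQ i (t+2) * CQ (k + 1 - 1 - i) := by
              rw [Finset.sum_range_succ']
              rw [bQ_zero_of_pos (by omega)]
              ring
            rw [first, ihd (t+2) (by omega)]
            rw [bQ_zero_of_pos (by omega)]
            rw [show t + 2 + 1 = t + 1 + 1 + 1 from by omega, ← bQ_pascal k (t+1)]
            ring
        · -- s ≥ k+1 : same as d = 0 case
          rw [bQ_zero_of_gt (by omega)]
          apply Finset.sum_eq_zero
          intro i hi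
          rw [Finset.mem_range] at hi
          rw [bQ_zero_of_gt (by omega)]
          ring
    intro s
    exact main (k+1) s (by omega)

lemma decomp {n : ℕ} {T : Finset (ℕ × ℕ)} (hn : 4 ≤ n) (hT : T ∈ triangulations 1 n) :
    ∃ j, 2 ≤ j ∧ j + 1 ≤ n ∧ ∃ T1 T2, T1 ∈ triangulations 1 j ∧ T2 ∈ triangulations j n ∧
      T = T1 ∪ T2 ∪ conSet j n := by
  obtain ⟨hTd, hTc, hTnc⟩ := mem_triangulations.mp hT
  set Jset := (Finset.Icc 2 (n-1)).filter (fun k => IsSide 1 n T 1 k) with hJset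
  have h2J : 2 ∈ Jset := by
    rw [hJset, Finset.mem_filter, Finset.mem_Icc]
    exact ⟨⟨le_rfl, by omega⟩, Or.inl (Or.inl ⟨le_rfl, rfl, by omega⟩)⟩
  set j := Jset.max' ⟨2, h2J⟩ with hj
  have hjmem : j ∈ Jset := Finset.max'_mem _ _
  rw [hJset, Finset.mem_filter, Finset.mem_Icc] at hjmem
  obtain ⟨⟨hj2, hjn1⟩, hjside⟩ := hjmem
  have hjn : j + 1 ≤ n := by omega
  have hmax : ∀ k, j < k → k < n → ¬ IsSide 1 n T 1 k := by
    intro k hk1 hk2 hs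
    have : k ∈ Jset := by
      rw [hJset, Finset.mem_filter, Finset.mem_Icc]
      exact ⟨⟨by omega, by omega⟩, hs⟩
    have := Finset.le_max' Jset k this
    omega
  have h1jT : 3 ≤ j → (1, j) ∈ T := by
    intro hj3
    rcases hjside with (⟨a1, a2, a3⟩ | ⟨a1, a2⟩) | h
    · omega
    · omega
    · exact h
  -- every diagonal of T crossing (j,n) is impossible
  have hclaim : ∀ q ∈ T, ¬(q.1 < j ∧ j < q.2 ∧ q.2 < n) := by
    intro q hq ⟨c1, c2, c3⟩
    obtain ⟨d1, d2, d3, d4⟩ := hTd q hq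
    rcases Nat.eq_or_lt_of_le d1 with he | hgt
    · -- q.1 = 1
      apply hmax q.2 (by omega) c3
      right
      have : ((1:ℕ), q.2) = q := Prod.ext (by omega) rfl
      rw [this]; exact hq
    · -- q.1 ≥ 2, so j ≥ 3 and (1,j) ∈ T
      have h1j := h1jT (by omega)
      have hnc := hTnc (1, j) h1j q hq
      exact hnc (Or.inl ⟨show (1:ℕ) < q.1 by omega, show q.1 < j by omega,
        show j < q.2 by omega⟩)
  have hjnT : j + 2 ≤ n → (j, n) ∈ T := by
    intro hj2n
    by_contra hnot
    have hSd : ∀ p ∈ insert (j, n) T, p ∈ allDiags 1 n := by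
      intro p hp
      rcases Finset.mem_insert.mp hp with rfl | hp
      · exact mem_allDiags.mpr ⟨show 1 ≤ j by omega, show j + 2 ≤ n from hj2n,
          le_rfl, fun ⟨e1, e2⟩ => by omega⟩
      · exact mem_allDiags.mpr (hTd p hp)
    have hSnc : ∀ p ∈ insert (j, n) T, ∀ q ∈ insert (j, n) T,
        ¬ Crosses p.1 p.2 q.1 q.2 := by
      intro p hp q hq hcr
      rcases Finset.mem_insert.mp hp with rfl | hp <;>
        rcases Finset.mem_insert.mp hq with rfl | hq
      · unfold Crosses at hcr; omega
      · obtain ⟨d1, d2, d3, d4⟩ := hTd q hq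
        have : q.1 < j ∧ j < q.2 ∧ q.2 < n := by
          rcases hcr with ⟨c1, c2, c3⟩ | ⟨c1, c2, c3⟩
          · exfalso
            have : n < q.2 := c3
            omega
          · exact ⟨by exact_mod_cast c1, by exact_mod_cast c2, by omega⟩
        exact hclaim q hq this
      · obtain ⟨d1, d2, d3, d4⟩ := hTd p hp
        have : p.1 < j ∧ j < p.2 ∧ p.2 < n := by
          rcases hcr with ⟨c1, c2, c3⟩ | ⟨c1, c2, c3⟩
          · exact ⟨c1, c2, by omega⟩
          · exfalso
            have : n < p.2 := c3
            omega
        exact hclaim p hp this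
      · exact hTnc p hp q hq hcr
    have hbound := diag_card_bound hSd hSnc
    rw [Finset.card_insert_of_notMem hnot, hTc] at hbound
    omega
  set T1 := T.filter (fun p => IsDiag 1 j p.1 p.2) with hT1
  set T2 := T.filter (fun p => IsDiag j n p.1 p.2) with hT2
  have h1dF : ∀ p ∈ T1, IsDiag 1 j p.1 p.2 := fun p hp => (Finset.mem_filter.mp hp).2
  have h2dF : ∀ p ∈ T2, IsDiag j n p.1 p.2 := fun p hp => (Finset.mem_filter.mp hp).2
  have hT1sub : T1 ⊆ T := Finset.filter_subset _ _
  have hT2sub : T2 ⊆ T := Finset.filter_subset _ _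
  have hconsub : conSet j n ⊆ T := by
    intro p hp
    rcases mem_conSet.mp hp with ⟨hc, rfl⟩ | ⟨hc, rfl⟩
    · exact h1jT hc
    · exact hjnT hc
  have hcover : ∀ p ∈ T, p ∈ T1 ∨ p ∈ T2 ∨ p ∈ conSet j n := by
    intro p hp
    obtain ⟨d1, d2, d3, d4⟩ := hTd p hp
    rcases Nat.lt_or_ge j p.2 with hbj | hbj
    · -- p.2 > j
      rcases Nat.lt_or_ge p.1 j with haj | haj
      · -- p.1 < j < p.2 : impossible or p = (1, ·) with big second coord
        exfalso
        have hp2n : p.2 < n := by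
          rcases Nat.eq_or_lt_of_le d3 with he | hlt
          · rcases Nat.eq_or_lt_of_le d1 with he1 | hgt1
            · exact absurd ⟨he1.symm, he⟩ d4
            · exfalso
              have h1j := h1jT (by omega)
              exact hTnc (1, j) h1j p hp (Or.inl ⟨show (1:ℕ) < p.1 by omega,
                show p.1 < j by omega, show j < p.2 by omega⟩)
          · omega
        exact hclaim p hp ⟨haj, hbj, hp2n⟩
      · -- j ≤ p.1
        rcases Nat.eq_or_lt_of_le (show p.1 + 2 ≤ p.2 from d2) with _ | _
        all_goals {
          by_cases hpe : p.1 = j ∧ p.2 = n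
          · right; right
            exact mem_conSet.mpr (Or.inr ⟨by omega, Prod.ext hpe.1 hpe.2⟩)
          · right; left
            exact Finset.mem_filter.mpr ⟨hp, haj, d2, d3, hpe⟩ }
    · -- p.2 ≤ j
      by_cases hpe : p.1 = 1 ∧ p.2 = j
      · right; right
        exact mem_conSet.mpr (Or.inl ⟨by omega, Prod.ext hpe.1 hpe.2⟩)
      · left
        exact Finset.mem_filter.mpr ⟨hp, d1, d2, hbj, hpe⟩
  have hTeq : T = T1 ∪ T2 ∪ conSet j n := by
    apply Finset.Subset.antisymm
    · intro p hp
      rcases hcover p hp with h | h | h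
      · exact Finset.mem_union.mpr (Or.inl (Finset.mem_union.mpr (Or.inl h)))
      · exact Finset.mem_union.mpr (Or.inl (Finset.mem_union.mpr (Or.inr h)))
      · exact Finset.mem_union.mpr (Or.inr h)
    · intro p hp
      rcases Finset.mem_union.mp hp with hp' | hp'
      · rcases Finset.mem_union.mp hp' with h | h
        · exact hT1sub h
        · exact hT2sub h
      · exact hconsub hp'
  obtain ⟨dis1, dis2⟩ := phi_disjoint hj2 hjn h1dF h2dF
  have hcardsum : T.card = T1.card + T2.card + (conSet j n).card := by
    rw [hTeq, Finset.card_union_of_disjoint dis2, Finset.card_union_of_disjoint dis1]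
  have hb1 : T1.card ≤ j - 1 - 2 := by
    apply diag_card_bound (l := 1) (r := j)
    · intro p hp; exact mem_allDiags.mpr (h1dF p hp)
    · intro p hp q hq; exact hTnc p (hT1sub hp) q (hT1sub hq)
  have hb2 : T2.card ≤ n - j - 2 := by
    apply diag_card_bound (l := j) (r := n)
    · intro p hp; exact mem_allDiags.mpr (h2dF p hp)
    · intro p hp q hq; exact hTnc p (hT2sub hp) q (hT2sub hq)
  have hcards : T1.card = j - 1 - 2 ∧ T2.card = n - j - 2 := by
    rw [conSet_card hj2] at hcardsum
    rw [hTc] at hcardsum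
    split_ifs at hcardsum <;> omega
  refine ⟨j, hj2, hjn, T1, T2, ?_, ?_, hTeq⟩
  · exact mem_triangulations.mpr ⟨h1dF, hcards.1,
      fun p hp q hq => hTnc p (hT1sub hp) q (hT1sub hq)⟩
  · exact mem_triangulations.mpr ⟨h2dF, hcards.2,
      fun p hp q hq => hTnc p (hT2sub hp) q (hT2sub hq)⟩

lemma Ncard_rec (n s : ℕ) (hn : 4 ≤ n) (hs : 1 ≤ s) :
    ((triangulations 1 n).filter fun T => degOne n T = s).card
      = ∑ j ∈ Finset.Icc 2 (n-1),
          ((triangulations 1 j).filter fun T1 => degOne j T1 = s - 1).card *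
            (triangulations j n).card := by
  have key : ((Finset.Icc 2 (n-1)).sigma fun j =>
      ((triangulations 1 j).filter fun T1 => degOne j T1 = s - 1) ×ˢ (triangulations j n)).card
      = ((triangulations 1 n).filter fun T => degOne n T = s).card := by
    apply Finset.card_bij (fun x _ => x.2.1 ∪ x.2.2 ∪ conSet x.1 n)
    · rintro ⟨j, T1, T2⟩ hx
      rw [Finset.mem_sigma, Finset.mem_product, Finset.mem_filter, Finset.mem_Icc] at hx
      obtain ⟨⟨hj2, hjn1⟩, ⟨⟨h1, hdeg⟩, h2⟩⟩ := hx
      dsimp only at hj2 hjn1 h1 hdeg h2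
      have hjn : j + 1 ≤ n := by omega
      have h1d := (mem_triangulations.mp h1).1
      have h2d := (mem_triangulations.mp h2).1
      rw [Finset.mem_filter]
      refine ⟨phi_triang hn hj2 hjn h1 h2, ?_⟩
      rw [phi_degOne hn hj2 hjn h1d h2d, hdeg]
      omega
    · rintro ⟨j, T1, T2⟩ hx ⟨j', T1', T2'⟩ hx' heq
      rw [Finset.mem_sigma, Finset.mem_product, Finset.mem_filter, Finset.mem_Icc] at hx hx'
      obtain ⟨⟨hj2, hjn1⟩, ⟨⟨h1, hdeg⟩, h2⟩⟩ := hx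
      obtain ⟨⟨hj2', hjn1'⟩, ⟨⟨h1', hdeg'⟩, h2'⟩⟩ := hx'
      dsimp only at hj2 hjn1 h1 hdeg h2 hj2' hjn1' h1' hdeg' h2'
      have hjn : j + 1 ≤ n := by omega
      have hjn' : j' + 1 ≤ n := by omega
      have h1d := (mem_triangulations.mp h1).1
      have h2d := (mem_triangulations.mp h2).1
      have h1d' := (mem_triangulations.mp h1').1
      have h2d' := (mem_triangulations.mp h2').1
      obtain ⟨hside, hmax⟩ := phi_side_max hj2 hjn h1d h2d (T1 := T1) (T2 := T2)
      obtain ⟨hside', hmax'⟩ := phi_side_max hj2' hjn' h1d' h2d' (T1 := T1') (T2 := T2')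
      simp only at heq
      have hjj : j = j' := by
        rcases lt_trichotomy j j' with h | h | h
        · exfalso
          apply hmax j' h (by omega)
          rw [heq]
          exact hside'
        · exact h
        · exfalso
          apply hmax' j h (by omega)
          rw [← heq]
          exact hside
      subst hjj
      have e1 : T1 = T1' := by
        rw [← phi_recover_T1 hj2 hjn h1d h2d, ← phi_recover_T1 hj2 hjn h1d' h2d', heq]
      have e2 : T2 = T2' := by
        rw [← phi_recover_T2 hj2 hjn h1d h2d, ← phi_recover_T2 hj2 hjn h1d' h2d', heq]
      subst e1; subst e2
      rfl
    · intro T hT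
      rw [Finset.mem_filter] at hT
      obtain ⟨j, hj2, hjn, T1, T2, h1, h2, hTeq⟩ := decomp hn hT.1
      have h1d := (mem_triangulations.mp h1).1
      have h2d := (mem_triangulations.mp h2).1
      refine ⟨⟨j, T1, T2⟩, ?_, hTeq.symm⟩
      rw [Finset.mem_sigma, Finset.mem_product, Finset.mem_filter, Finset.mem_Icc]
      refine ⟨⟨hj2, show j ≤ n - 1 by omega⟩, ⟨h1, ?_⟩, h2⟩
      · have := hT.2
        rw [hTeq, phi_degOne hn hj2 hjn h1d h2d] at this
        dsimp only
        omega
  rw [← key, Finset.card_sigma]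
  apply Finset.sum_congr rfl
  intro j _
  exact Finset.card_product _ _

lemma shift_down_mem {j n : ℕ} (hj1 : 1 ≤ j) (hjn : j ≤ n) {T : Finset (ℕ × ℕ)}
    (hT : T ∈ triangulations j n) :
    T.image (fun p => (p.1 - (j-1), p.2 - (j-1))) ∈ triangulations 1 (n - j + 1) := by
  obtain ⟨hd, hc, hnc⟩ := mem_triangulations.mp hT
  have hinj : Set.InjOn (fun p : ℕ × ℕ => (p.1 - (j-1), p.2 - (j-1))) T := by
    intro p hp q hq he
    obtain ⟨a1, a2, a3⟩ := isDiag_dest (hd p hp)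
    obtain ⟨b1, b2, b3⟩ := isDiag_dest (hd q hq)
    rw [Prod.ext_iff] at he
    obtain ⟨e1, e2⟩ := he
    simp only at e1 e2
    exact Prod.ext (by omega) (by omega)
  refine mem_triangulations.mpr ⟨?_, ?_, ?_⟩
  · intro p hp
    rw [Finset.mem_image] at hp
    obtain ⟨q, hq, hqe⟩ := hp
    obtain ⟨a1, a2, a3, a4⟩ := hd q hq
    subst hqe
    refine ⟨show 1 ≤ q.1 - (j-1) by omega, show (q.1 - (j-1)) + 2 ≤ q.2 - (j-1) by omega,
      show q.2 - (j-1) ≤ n - j + 1 by omega, ?_⟩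
    show ¬(q.1 - (j-1) = 1 ∧ q.2 - (j-1) = n - j + 1)
    omega
  · rw [Finset.card_image_of_injOn hinj, hc]
    omega
  · intro p hp q hq
    rw [Finset.mem_image] at hp hq
    obtain ⟨p', hp', hpe⟩ := hp
    obtain ⟨q', hq', hqe⟩ := hq
    subst hpe; subst hqe
    intro hcr
    have hcr' : Crosses (p'.1 - (j-1)) (p'.2 - (j-1)) (q'.1 - (j-1)) (q'.2 - (j-1)) := hcr
    obtain ⟨a1, a2, a3⟩ := isDiag_dest (hd p' hp')
    obtain ⟨b1, b2, b3⟩ := isDiag_dest (hd q' hq')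
    apply hnc p' hp' q' hq'
    unfold Crosses at hcr' ⊢
    omega

lemma shift_up_mem {j n : ℕ} (hj1 : 1 ≤ j) (hjn : j ≤ n) {S : Finset (ℕ × ℕ)}
    (hS : S ∈ triangulations 1 (n - j + 1)) :
    S.image (fun p => (p.1 + (j-1), p.2 + (j-1))) ∈ triangulations j n := by
  obtain ⟨hd, hc, hnc⟩ := mem_triangulations.mp hS
  have hinj : Set.InjOn (fun p : ℕ × ℕ => (p.1 + (j-1), p.2 + (j-1))) S := by
    intro p hp q hq he
    rw [Prod.ext_iff] at he
    obtain ⟨e1, e2⟩ := he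
    simp only at e1 e2
    exact Prod.ext (by omega) (by omega)
  refine mem_triangulations.mpr ⟨?_, ?_, ?_⟩
  · intro p hp
    rw [Finset.mem_image] at hp
    obtain ⟨q, hq, hqe⟩ := hp
    obtain ⟨a1, a2, a3, a4⟩ := hd q hq
    subst hqe
    refine ⟨show j ≤ q.1 + (j-1) by omega, show (q.1 + (j-1)) + 2 ≤ q.2 + (j-1) by omega,
      show q.2 + (j-1) ≤ n by omega, ?_⟩
    show ¬(q.1 + (j-1) = j ∧ q.2 + (j-1) = n)
    omega
  · rw [Finset.card_image_of_injOn hinj, hc]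
    omega
  · intro p hp q hq
    rw [Finset.mem_image] at hp hq
    obtain ⟨p', hp', hpe⟩ := hp
    obtain ⟨q', hq', hqe⟩ := hq
    subst hpe; subst hqe
    intro hcr
    have hcr' : Crosses (p'.1 + (j-1)) (p'.2 + (j-1)) (q'.1 + (j-1)) (q'.2 + (j-1)) := hcr
    apply hnc p' hp' q' hq'
    unfold Crosses at hcr' ⊢
    omega

lemma triangulations_shift {j n : ℕ} (hj1 : 1 ≤ j) (hjn : j ≤ n) :
    (triangulations j n).card = (triangulations 1 (n - j + 1)).card := by
  apply Finset.card_bij' (fun T _ => T.image (fun p => (p.1 - (j-1), p.2 - (j-1))))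
    (fun S _ => S.image (fun p => (p.1 + (j-1), p.2 + (j-1))))
    (fun T hT => shift_down_mem hj1 hjn hT) (fun S hS => shift_up_mem hj1 hjn hS)
  · intro T hT
    obtain ⟨hd, -, -⟩ := mem_triangulations.mp hT
    rw [Finset.image_image]
    conv_rhs => rw [← Finset.image_id (s := T)]
    apply Finset.image_congr
    intro p hp
    obtain ⟨a1, a2, a3⟩ := isDiag_dest (hd p hp)
    show (p.1 - (j-1) + (j-1), p.2 - (j-1) + (j-1)) = p
    exact Prod.ext (by omega) (by omega)
  · intro S hS
    obtain ⟨hd, -, -⟩ := mem_triangulations.mp hS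
    rw [Finset.image_image]
    conv_rhs => rw [← Finset.image_id (s := S)]
    apply Finset.image_congr
    intro p hp
    show (p.1 + (j-1) - (j-1), p.2 + (j-1) - (j-1)) = p
    exact Prod.ext (by omega) (by omega)

lemma allDiags_small {l r : ℕ} (h : r ≤ l + 2) : allDiags l r = ∅ := by
  apply Finset.eq_empty_of_forall_notMem
  intro p hp
  obtain ⟨a1, a2, a3, a4⟩ := mem_allDiags.mp hp
  omega

lemma triangulations_small {l r : ℕ} (h : r ≤ l + 2) : triangulations l r = {∅} := by
  ext T
  rw [mem_triangulations, Finset.mem_singleton]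
  constructor
  · rintro ⟨hd, -, -⟩
    apply Finset.eq_empty_of_forall_notMem
    intro p hp
    obtain ⟨a1, a2, a3, a4⟩ := hd p hp
    omega
  · rintro rfl
    refine ⟨by simp, by simp; omega, by simp⟩

lemma degOne_two : degOne 2 (∅ : Finset (ℕ × ℕ)) = 0 := by
  have he : triangles 1 2 (∅ : Finset (ℕ × ℕ)) = ∅ := by
    apply Finset.eq_empty_of_forall_notMem
    intro t ht
    rw [mem_triangles] at ht
    obtain ⟨hr, o1, o2, s1, s2, s3⟩ := ht
    rcases s1 with (⟨a1, a2, a3⟩ | ⟨a1, a2⟩) | h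
    · omega
    · omega
    · exact absurd h (Finset.notMem_empty _)
  unfold degOne
  rw [he]
  simp

lemma triangles_three : triangles 1 3 (∅ : Finset (ℕ × ℕ)) = {((1:ℕ), 2, 3)} := by
  ext t
  rw [mem_triangles, Finset.mem_singleton]
  constructor
  · rintro ⟨hr, o1, o2, s1, s2, s3⟩
    have e1 : (1 ≤ t.1 ∧ t.2.1 = t.1 + 1 ∧ t.2.1 ≤ 3) ∨ (t.1 = 1 ∧ t.2.1 = 3) := by
      rcases s1 with h | h
      · exact h
      · exact absurd h (Finset.notMem_empty _)
    have e2 : (1 ≤ t.2.1 ∧ t.2.2 = t.2.1 + 1 ∧ t.2.2 ≤ 3) ∨ (t.2.1 = 1 ∧ t.2.2 = 3) := by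
      rcases s2 with h | h
      · exact h
      · exact absurd h (Finset.notMem_empty _)
    exact Prod.ext (show t.1 = 1 by omega)
      (Prod.ext (show t.2.1 = 2 by omega) (show t.2.2 = 3 by omega))
  · rintro rfl
    exact ⟨show (3:ℕ) ≤ 3 from le_rfl, show (1:ℕ) < 2 by norm_num, show (2:ℕ) < 3 by norm_num,
      Or.inl (Or.inl ⟨le_rfl, rfl, show (2:ℕ) ≤ 3 by norm_num⟩),
      Or.inl (Or.inl ⟨show (1:ℕ) ≤ 2 by norm_num, rfl, show (3:ℕ) ≤ 3 by norm_num⟩),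
      Or.inl (Or.inr ⟨rfl, rfl⟩)⟩

lemma degOne_three : degOne 3 (∅ : Finset (ℕ × ℕ)) = 1 := by
  unfold degOne
  rw [triangles_three, Finset.filter_singleton, if_pos (by norm_num)]
  simp

lemma sum_Icc2 {M : Type*} [AddCommMonoid M] (n : ℕ) (f : ℕ → M) :
    ∑ j ∈ Finset.Icc 2 n, f j = ∑ i ∈ Finset.range (n - 1), f (i + 2) := by
  apply Finset.sum_nbij' (i := fun j => j - 2) (j := fun i => i + 2) <;> intros <;>
    simp_all [Finset.mem_Icc, Finset.mem_range] <;> omega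

lemma degOne_le (m : ℕ) (T : Finset (ℕ × ℕ)) : degOne m T ≤ (m+1)^3 := by
  have hc : ((range (m+1)) ×ˢ ((range (m+1)) ×ˢ (range (m+1)))).card = (m+1)^3 := by
    rw [Finset.card_product, Finset.card_product, Finset.card_range]
    ring
  unfold degOne triangles
  exact le_trans (Finset.card_filter_le _ _)
    (le_trans (Finset.card_filter_le _ _) (le_of_eq hc))

lemma main_count (m : ℕ) : 2 ≤ m →
    (∀ s, (((triangulations 1 m).filter fun T => degOne m T = s).card : ℚ) = bQ (m-2) s) ∧
      (triangulations 1 m).card = catalan (m-2) := by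
  induction m using Nat.strong_induction_on with
  | _ m ih =>
  intro hm
  by_cases h2 : m = 2
  · subst h2
    have ht : triangulations 1 2 = {∅} := triangulations_small (by norm_num)
    constructor
    · intro s
      rw [ht, Finset.filter_singleton, degOne_two]
      by_cases hs : (0:ℕ) = s
      · rw [if_pos hs, ← hs, Finset.card_singleton]
        rw [show (2:ℕ) - 2 = 0 from rfl, bQ_zero_zero]
        norm_num
      · rw [if_neg hs, Finset.card_empty]
        rw [show (2:ℕ) - 2 = 0 from rfl, bQ_zero_of_pos (by omega)]
        norm_num
    · rw [ht, Finset.card_singleton, show (2:ℕ) - 2 = 0 from rfl, catalan_zero]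
  by_cases h3 : m = 3
  · subst h3
    have ht : triangulations 1 3 = {∅} := triangulations_small (by norm_num)
    constructor
    · intro s
      rw [ht, Finset.filter_singleton, degOne_three]
      by_cases hs : (1:ℕ) = s
      · rw [if_pos hs, ← hs, Finset.card_singleton]
        rw [show (3:ℕ) - 2 = 1 from rfl, bQ_formula le_rfl le_rfl]
        norm_num [Nat.factorial]
      · rw [if_neg hs, Finset.card_empty]
        rw [show (3:ℕ) - 2 = 1 from rfl]
        rcases Nat.eq_zero_or_pos s with rfl | hs1
        · rw [bQ_pos_zero le_rfl]; norm_num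
        · rw [bQ_zero_of_gt (by omega)]; norm_num
    · rw [ht, Finset.card_singleton, show (3:ℕ) - 2 = 1 from rfl, catalan_one]
  have hm4 : 4 ≤ m := by omega
  have hcat : ∀ j, 2 ≤ j → j ≤ m - 1 → (triangulations j m).card = catalan (m - j - 1) := by
    intro j hj2 hj1
    rw [triangulations_shift (by omega) (by omega), (ih (m - j + 1) (by omega) (by omega)).2,
      show m - j + 1 - 2 = m - j - 1 by omega]
  have hzero : ((triangulations 1 m).filter fun T => degOne m T = 0) = ∅ := by
    apply Finset.eq_empty_of_forall_notMem
    intro T hT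
    rw [Finset.mem_filter] at hT
    obtain ⟨j, hj2, hjn, T1, T2, h1, h2, hTeq⟩ := decomp (by omega) hT.1
    have h1d := (mem_triangulations.mp h1).1
    have h2d := (mem_triangulations.mp h2).1
    have h0 := hT.2
    rw [hTeq, phi_degOne (by omega) hj2 hjn h1d h2d] at h0
    omega
  constructor
  · intro s
    rcases Nat.eq_zero_or_pos s with rfl | hs
    · rw [hzero, Finset.card_empty, bQ_pos_zero (by omega)]
      norm_num
    · rw [Ncard_rec m s (by omega) hs]
      push_cast
      have e1 : ∀ j ∈ Finset.Icc 2 (m-1),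
          ((((triangulations 1 j).filter fun T1 => degOne j T1 = s - 1).card : ℚ) *
            ((triangulations j m).card : ℚ)) = bQ (j-2) (s-1) * CQ (m-j-1) := by
        intro j hj
        rw [Finset.mem_Icc] at hj
        rw [(ih j (by omega) (by omega)).1 (s-1), hcat j hj.1 hj.2]
        rfl
      calc (∑ j ∈ Finset.Icc 2 (m-1),
            ((((triangulations 1 j).filter fun T1 => degOne j T1 = s - 1).card : ℚ) *
              ((triangulations j m).card : ℚ)))
          = ∑ j ∈ Finset.Icc 2 (m-1), bQ (j-2) (s-1) * CQ (m-j-1) :=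
            Finset.sum_congr rfl e1
        _ = ∑ i ∈ Finset.range (m - 1 - 1), bQ (i+2-2) (s-1) * CQ (m-(i+2)-1) :=
            sum_Icc2 (m-1) _
        _ = ∑ i ∈ Finset.range (m-2), bQ i (s-1) * CQ ((m-2) - 1 - i) := by
            apply Finset.sum_congr (by rw [show m - 1 - 1 = m - 2 by omega])
            intro i hi
            rw [show i + 2 - 2 = i by omega, show m - (i+2) - 1 = (m-2) - 1 - i by omega]
        _ = bQ (m-2) ((s-1)+1) := bQ_conv (m-2) (s-1)
        _ = bQ (m-2) s := by rw [show s - 1 + 1 = s by omega]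
  · have hfib : (triangulations 1 m).card =
        ∑ s ∈ range ((m+1)^3 + 1), ((triangulations 1 m).filter fun T => degOne m T = s).card :=
      Finset.card_eq_sum_card_fiberwise
        (fun T _ => Finset.mem_range.mpr (by have := degOne_le m T; omega))
    rw [hfib, Finset.sum_range_succ', hzero, Finset.card_empty, add_zero]
    have e2 : ∀ s ∈ Finset.range ((m+1)^3),
        ((triangulations 1 m).filter fun T => degOne m T = s + 1).card
          = ∑ j ∈ Finset.Icc 2 (m-1),
              ((triangulations 1 j).filter fun T1 => degOne j T1 = s).card *
                (triangulations j m).card := by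
      intro s _
      rw [Ncard_rec m (s+1) (by omega) (by omega)]
      simp only [Nat.add_sub_cancel]
    rw [Finset.sum_congr rfl e2, Finset.sum_comm]
    have e3 : ∀ j ∈ Finset.Icc 2 (m-1),
        (∑ s ∈ Finset.range ((m+1)^3),
          ((triangulations 1 j).filter fun T1 => degOne j T1 = s).card *
            (triangulations j m).card)
          = catalan (j-2) * catalan (m-j-1) := by
      intro j hj
      rw [Finset.mem_Icc] at hj
      rw [← Finset.sum_mul]
      have hfj : (triangulations 1 j).card =
          ∑ s ∈ range ((m+1)^3), ((triangulations 1 j).filter fun T1 => degOne j T1 = s).card := by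
        apply Finset.card_eq_sum_card_fiberwise
        intro T _
        rw [Finset.mem_coe, Finset.mem_range]
        have h1 := degOne_le j T
        have h2 : (j+1)^3 < (m+1)^3 := Nat.pow_lt_pow_left (by omega) (by norm_num)
        omega
      rw [← hfj, (ih j (by omega) (by omega)).2, hcat j hj.1 hj.2]
    rw [Finset.sum_congr rfl e3, sum_Icc2 (m-1)]
    have e4 : ∀ i ∈ Finset.range (m - 1 - 1),
        catalan (i + 2 - 2) * catalan (m - (i+2) - 1) = catalan i * catalan ((m-3) - i) := by
      intro i hi
      rw [show i + 2 - 2 = i by omega, show m - (i+2) - 1 = (m-3) - i by omega]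
    rw [Finset.sum_congr rfl e4]
    rw [show m - 2 = (m - 3) + 1 by omega, catalan_succ',
      Finset.Nat.sum_antidiagonal_eq_sum_range_succ_mk]
    apply Finset.sum_congr (by rw [show m - 1 - 1 = m - 3 + 1 by omega])
    intro i _
    rfl


/-- the distribution of the number of triangles at vertex `1`
(Lemma 5(1)). -/
theorem degree_distribution (n s : ℕ) (hn : 4 ≤ n) (hs1 : 1 ≤ s) (hs2 : s ≤ n - 2) :
    (((triangulations 1 n).filter fun T => degOne n T = s).card : ℚ) =
      (s : ℚ) * ((2 * n - s - 5).factorial : ℚ) /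
        (((n - s - 2).factorial : ℚ) * ((n - 2).factorial : ℚ)) := by
  rw [(main_count n (by omega)).1 s, bQ_formula hs2 (by omega)]
  rw [show 2 * (n - 2) - s - 1 = 2 * n - s - 5 by omega, show (n - 2) - s = n - s - 2 by omega]
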